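/- Let W be a finite group, P a W-lattice, λ: P → Z/nZ a surjective W-module homomorphism where W acts trivially on Z/nZ, and Q = ker λ. Let S ⊆ (Z/nZ)^m be a cyclic subgroup, and let P^m_S = (λ^m)⁻¹(S) ⊆ P^m, a W-submodule for the diagonal W-action on P^m. Then P^m_S is isomorphic as a W-module to P¹_{S₁} ⊕ Q^{m-1} for some subgroup S₁ ⊆ Z/nZ isomorphic to S, where P¹_{S₁} = λ⁻¹(S₁) ⊆ P. -/

import Mathlib

/-- The action of `G` on an invariant additive subgroup. -/
def subAction {G M : Type} [Group G] [AddCommGroup M] [DistribMulAction G M]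
    (S : AddSubgroup M) (h : ∀ (g : G) (x : M), x ∈ S → g • x ∈ S) :
    DistribMulAction G S where
  smul g x := ⟨g • (x : M), h g x x.2⟩
  one_smul x := Subtype.ext (one_smul G (x : M))
  mul_smul g g' x := Subtype.ext (mul_smul g g' (x : M))
  smul_zero g := Subtype.ext (smul_zero g)
  smul_add g x y := Subtype.ext (smul_add g (x : M) (y : M))

section Preimage

variable {P : Type} [AddCommGroup P] {n m : ℕ}

/-- The componentwise application `λ^m : P^m → (ℤ/nℤ)^m` of `λ : P → ℤ/nℤ`. -/
def piHom (lam : P →+ ZMod n) (m : ℕ) : (Fin m → P) →+ (Fin m → ZMod n) where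
  toFun f := fun i => lam (f i)
  map_zero' := by funext i; simp
  map_add' f g := by funext i; simp

/-- `P^m_S`, the preimage of `S ⊆ (ℤ/nℤ)^m` under `λ^m`. -/
def preSub (lam : P →+ ZMod n) (m : ℕ) (S : AddSubgroup (Fin m → ZMod n)) :
    AddSubgroup (Fin m → P) :=
  S.comap (piHom lam m)

end Preimage

section Aux

lemma piHom_apply {P : Type} [AddCommGroup P] {n : ℕ} (lam : P →+ ZMod n) (m : ℕ)
    (f : Fin m → P) (i : Fin m) : piHom lam m f i = lam (f i) := rfl

variable {m : ℕ}

/-- Componentwise action of an integer matrix on `M^m` for any abelian group `M`. -/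
def matHom {M : Type*} [AddCommGroup M] (A : Matrix (Fin m) (Fin m) ℤ) :
    (Fin m → M) →+ (Fin m → M) where
  toFun x := fun i => ∑ j, A i j • x j
  map_zero' := by funext i; simp
  map_add' x y := by funext i; simp [smul_add, Finset.sum_add_distrib]

lemma matHom_apply {M : Type*} [AddCommGroup M] (A : Matrix (Fin m) (Fin m) ℤ)
    (x : Fin m → M) (i : Fin m) : matHom A x i = ∑ j, A i j • x j := rfl

lemma matHom_mul {M : Type*} [AddCommGroup M] (A B : Matrix (Fin m) (Fin m) ℤ)
    (x : Fin m → M) : matHom A (matHom B x) = matHom (A * B) x := by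
  funext i
  simp only [matHom_apply, Matrix.mul_apply, Finset.smul_sum, Finset.sum_smul, smul_smul]
  exact Finset.sum_comm

lemma matHom_one {M : Type*} [AddCommGroup M] (x : Fin m → M) :
    matHom (1 : Matrix (Fin m) (Fin m) ℤ) x = x := by
  funext i
  simp [matHom_apply, Matrix.one_apply, ite_smul]

lemma matHom_natural {M N : Type*} [AddCommGroup M] [AddCommGroup N] (f : M →+ N)
    (A : Matrix (Fin m) (Fin m) ℤ) (x : Fin m → M) :
    (fun i => f (matHom A x i)) = matHom A (fun j => f (x j)) := by
  funext i
  simp [matHom_apply, map_sum]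

/-- The additive automorphism of `M^m` from a pair of inverse integer matrices. -/
def matEquiv {M : Type*} [AddCommGroup M] (A B : Matrix (Fin m) (Fin m) ℤ)
    (hAB : A * B = 1) (hBA : B * A = 1) : (Fin m → M) ≃+ (Fin m → M) where
  toFun := matHom A
  invFun := matHom B
  left_inv x := by rw [matHom_mul, hBA, matHom_one]
  right_inv x := by rw [matHom_mul, hAB, matHom_one]
  map_add' := (matHom A).map_add

lemma matHom_mulVec (A : Matrix (Fin m) (Fin m) ℤ) (v : Fin m → ℤ) :
    matHom A v = A.mulVec v := by
  funext i
  simp [matHom_apply, Matrix.mulVec, dotProduct, smul_eq_mul]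

/-- Any integer vector can be carried to a multiple of the first standard basis
vector by a `GL_m(ℤ)` matrix. -/
lemma exists_reduction (k : ℕ) (v : Fin (k + 1) → ℤ) :
    ∃ (A B : Matrix (Fin (k + 1)) (Fin (k + 1)) ℤ) (d : ℤ),
      A * B = 1 ∧ B * A = 1 ∧ A.mulVec v = Pi.single 0 d := by
  rcases eq_or_ne v 0 with rfl | hv
  · exact ⟨1, 1, 0, one_mul 1, one_mul 1, by simp⟩
  · set N : Submodule ℤ (Fin (k+1) → ℤ) := Submodule.span ℤ {v} with hN
    obtain ⟨nn, snf⟩ := N.smithNormalForm (Pi.basisFun ℤ (Fin (k+1)))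
    have hvN : v ∈ N := Submodule.mem_span_singleton_self v
    have hgen : ∀ x : N, ∃ c : ℤ, (x : Fin (k+1) → ℤ) = c • v := by
      intro x
      obtain ⟨c, hc⟩ := Submodule.mem_span_singleton.mp x.2
      exact ⟨c, hc.symm⟩
    -- nn = 1
    have hnn : nn = 1 := by
      rcases Nat.lt_or_ge nn 1 with h | h
      · interval_cases nn
        · exfalso
          haveI : Subsingleton N := snf.bN.repr.toEquiv.subsingleton
          have : (⟨v, hvN⟩ : N) = 0 := Subsingleton.elim _ _
          exact hv (by simpa using congrArg Subtype.val this)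
      rcases Nat.lt_or_ge nn 2 with h2 | h2
      · omega
      exfalso
      obtain ⟨c0, hc0⟩ := hgen (snf.bN ⟨0, by omega⟩)
      obtain ⟨c1, hc1⟩ := hgen (snf.bN ⟨1, by omega⟩)
      have hrel : c1 • snf.bN ⟨0, by omega⟩ - c0 • snf.bN ⟨1, by omega⟩ = 0 := by
        apply Subtype.ext
        push_cast
        rw [hc0, hc1, smul_smul, smul_smul, mul_comm]
        simp
      have h01 : (⟨0, by omega⟩ : Fin nn) ≠ ⟨1, by omega⟩ := by
        simp [Fin.ext_iff]
      have hrepr := congrArg (fun y => snf.bN.repr y ⟨0, by omega⟩) hrel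
      simp [Finsupp.single_apply, h01] at hrepr
      have hrepr' := congrArg (fun y => snf.bN.repr y ⟨1, by omega⟩) hrel
      simp [Finsupp.single_apply, h01.symm, Ne.symm h01] at hrepr'
      have : (snf.bN ⟨0, by omega⟩ : Fin (k+1) → ℤ) = 0 := by
        rw [hc0]
        rw [hrepr', zero_smul]
      exact snf.bN.ne_zero ⟨0, by omega⟩ (Subtype.ext (by simpa using this))
    subst hnn
    -- v is a scalar multiple of a basis vector of the ambient lattice
    have hmem : (⟨v, hvN⟩ : N) ∈ Submodule.span ℤ (Set.range snf.bN) :=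
      Module.Basis.mem_span snf.bN _
    rw [Set.range_unique] at hmem
    obtain ⟨r, hr⟩ := Submodule.mem_span_singleton.mp hmem
    have hvr : v = (r * snf.a default) • snf.bM (snf.f default) := by
      have := congrArg Subtype.val hr
      push_cast at this
      rw [snf.snf default, smul_smul] at this
      exact this.symm
    -- the change-of-basis automorphism
    set E : (Fin (k+1) → ℤ) ≃ₗ[ℤ] (Fin (k+1) → ℤ) :=
      snf.bM.equiv (Pi.basisFun ℤ (Fin (k+1))) (Equiv.swap (snf.f default) 0) with hE
    have hEv : E v = Pi.single 0 (r * snf.a default) := by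
      rw [hvr, map_smul, hE, Module.Basis.equiv_apply, Equiv.swap_apply_left]
      funext i
      rcases eq_or_ne i 0 with rfl | hi
      · simp
      · simp [hi]
    refine ⟨LinearMap.toMatrix' (E : (Fin (k+1) → ℤ) →ₗ[ℤ] _),
      LinearMap.toMatrix' (E.symm : (Fin (k+1) → ℤ) →ₗ[ℤ] _), r * snf.a default, ?_, ?_, ?_⟩
    · rw [← LinearMap.toMatrix'_comp]
      simp
    · rw [← LinearMap.toMatrix'_comp]
      simp
    · rw [← Matrix.toLin'_apply, Matrix.toLin'_toMatrix']
      exact hEv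

end Aux

theorem preimage_cyclic_decomposition (W : Type) [Group W] [Finite W]
    (n m : ℕ) (hn : 1 ≤ n) (hm : 1 ≤ m)
    (P : Type) [AddCommGroup P] [DistribMulAction W P]
    [Module.Free ℤ P] [Module.Finite ℤ P]
    (lam : P →+ ZMod n) (hsurj : Function.Surjective lam)
    (heq : ∀ (w : W) (x : P), lam (w • x) = lam x)
    (S : AddSubgroup (Fin m → ZMod n)) (hcyc : IsAddCyclic S) :
    ∃ S₁ : AddSubgroup (ZMod n), Nonempty (S₁ ≃+ S) ∧
      ∃ (h1 : ∀ (w : W) (x : Fin m → P),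
            x ∈ preSub lam m S → w • x ∈ preSub lam m S)
        (h2 : ∀ (w : W) (x : P), x ∈ S₁.comap lam → w • x ∈ S₁.comap lam)
        (h3 : ∀ (w : W) (x : P), x ∈ lam.ker → w • x ∈ lam.ker),
        letI := subAction _ h1
        letI := subAction _ h2
        letI := subAction _ h3
        ∃ e : ↥(preSub lam m S) ≃+ (↥(S₁.comap lam) × (Fin (m - 1) → ↥lam.ker)),
          ∀ (w : W) (x : ↥(preSub lam m S)), e (w • x) = w • e x := by
  haveI : NeZero n := ⟨by omega⟩
  obtain ⟨k, rfl⟩ : ∃ k, m = k + 1 := ⟨m - 1, by omega⟩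
  obtain ⟨g, hg⟩ := hcyc.exists_generator
  set g0 : Fin (k+1) → ZMod n := (g : Fin (k+1) → ZMod n) with hg0
  have hSmem : ∀ x, x ∈ S ↔ ∃ z : ℤ, z • g0 = x := by
    intro x
    constructor
    · intro hx
      obtain ⟨z, hz⟩ := AddSubgroup.mem_zmultiples_iff.mp (hg ⟨x, hx⟩)
      exact ⟨z, congrArg Subtype.val hz⟩
    · rintro ⟨z, rfl⟩
      exact zsmul_mem g.2 z
  set v : Fin (k+1) → ℤ := fun i => ((g0 i).val : ℤ) with hvdef
  have hvg : ∀ i, ((v i : ℤ) : ZMod n) = g0 i := by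
    intro i
    simp only [hvdef]
    push_cast
    simp [ZMod.natCast_val, ZMod.cast_id]
  obtain ⟨A, B, d, hAB, hBA, hAv⟩ := exists_reduction k v
  set d' : ZMod n := (d : ZMod n) with hd'
  set S₁ : AddSubgroup (ZMod n) := AddSubgroup.zmultiples d' with hS₁def
  set s0 : Fin (k+1) → ZMod n := Pi.single 0 d' with hs0
  set S' : AddSubgroup (Fin (k+1) → ZMod n) := AddSubgroup.zmultiples s0 with hS'def
  have hsingle : ∀ z : ℤ, z • s0 = (Pi.single (0 : Fin (k+1)) (z • d') : Fin (k+1) → ZMod n) := by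
    intro z
    funext i
    rcases eq_or_ne i 0 with rfl | hi
    · simp [hs0]
    · simp [hs0, Pi.single_eq_of_ne hi]
  -- Ebar maps g0 to s0
  have hEg : matHom A g0 = s0 := by
    have h0 : g0 = fun j => (Int.castAddHom (ZMod n)) (v j) := by
      funext j
      exact (hvg j).symm
    rw [h0, ← matHom_natural (Int.castAddHom (ZMod n)) A v, matHom_mulVec, hAv]
    funext i
    rcases eq_or_ne i 0 with rfl | hi
    · simp [hs0, hd']
    · simp [hs0, Pi.single_eq_of_ne hi]
  have hBA' : ∀ {M : Type} [AddCommGroup M] (x : Fin (k+1) → M),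
      matHom B (matHom A x) = x := by
    intro M _ x
    rw [matHom_mul, hBA, matHom_one]
  have hAB' : ∀ {M : Type} [AddCommGroup M] (x : Fin (k+1) → M),
      matHom A (matHom B x) = x := by
    intro M _ x
    rw [matHom_mul, hAB, matHom_one]
  -- membership transfer along the matrix automorphism
  have hSiff : ∀ x, x ∈ S ↔ matHom A x ∈ S' := by
    intro x
    rw [hSmem]
    constructor
    · rintro ⟨z, rfl⟩
      exact AddSubgroup.mem_zmultiples_iff.mpr ⟨z, by rw [← hEg, ← map_zsmul]⟩
    · intro hx
      obtain ⟨z, hz⟩ := AddSubgroup.mem_zmultiples_iff.mp hx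
      refine ⟨z, ?_⟩
      have : matHom A (z • g0) = matHom A x := by
        rw [map_zsmul, hEg, hz]
      have := congrArg (matHom B) this
      rwa [hBA', hBA'] at this
  have hS'mem : ∀ x : Fin (k+1) → ZMod n,
      x ∈ S' ↔ x 0 ∈ S₁ ∧ ∀ i, i ≠ 0 → x i = 0 := by
    intro x
    constructor
    · intro hx
      obtain ⟨z, rfl⟩ := AddSubgroup.mem_zmultiples_iff.mp hx
      rw [hsingle]
      constructor
      · exact AddSubgroup.mem_zmultiples_iff.mpr ⟨z, by simp⟩
      · intro i hi
        simp [Pi.single_eq_of_ne hi]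
    · rintro ⟨h0, hrest⟩
      obtain ⟨z, hz⟩ := AddSubgroup.mem_zmultiples_iff.mp h0
      refine AddSubgroup.mem_zmultiples_iff.mpr ⟨z, ?_⟩
      rw [hsingle]
      funext i
      rcases eq_or_ne i 0 with rfl | hi
      · simp [hz]
      · simp [Pi.single_eq_of_ne hi, hrest i hi]
  -- the isomorphism S₁ ≃+ S
  have hsingleS' : ∀ s : ZMod n, s ∈ S₁ → (Pi.single 0 s : Fin (k+1) → ZMod n) ∈ S' := by
    intro s hs
    rw [hS'mem]
    refine ⟨by simpa using hs, fun i hi => by rw [Pi.single_eq_of_ne hi]⟩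
  have e1 : S₁ ≃+ S :=
    { toFun := fun s => ⟨matHom B (Pi.single 0 (s : ZMod n)), by
        rw [hSiff, hAB']
        exact hsingleS' _ s.2⟩
      invFun := fun x => ⟨matHom A (x : Fin (k+1) → ZMod n) 0, by
        have := (hSiff _).mp x.2
        exact ((hS'mem _).mp this).1⟩
      left_inv := fun s => by
        apply Subtype.ext
        show matHom A (matHom B (Pi.single 0 (s : ZMod n))) 0 = s
        rw [hAB']
        simp
      right_inv := fun x => by
        apply Subtype.ext
        show matHom B (Pi.single 0 (matHom A (x : Fin (k+1) → ZMod n) 0)) = x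
        have hx' := (hSiff _).mp x.2
        have h2 := (hS'mem _).mp hx'
        have : (Pi.single 0 (matHom A (x : Fin (k+1) → ZMod n) 0) : Fin (k+1) → ZMod n)
            = matHom A (x : Fin (k+1) → ZMod n) := by
          funext i
          rcases eq_or_ne i 0 with rfl | hi
          · simp
          · simp [Pi.single_eq_of_ne hi, h2.2 i hi]
        rw [this, hBA']
      map_add' := fun a b => by
        apply Subtype.ext
        show matHom B (Pi.single 0 ((a : ZMod n) + b)) =
          matHom B (Pi.single 0 (a : ZMod n)) + matHom B (Pi.single 0 (b : ZMod n))
        rw [← map_add, ← Pi.single_add] }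
  -- invariance conditions
  have h1 : ∀ (w : W) (x : Fin (k+1) → P),
      x ∈ preSub lam (k+1) S → w • x ∈ preSub lam (k+1) S := by
    intro w x hx
    have : piHom lam (k+1) (w • x) = piHom lam (k+1) x := by
      funext i
      exact heq w (x i)
    show piHom lam (k+1) (w • x) ∈ S
    rw [this]
    exact hx
  have h2 : ∀ (w : W) (x : P), x ∈ S₁.comap lam → w • x ∈ S₁.comap lam := by
    intro w x hx
    show lam (w • x) ∈ S₁
    rw [heq]
    exact hx
  have h3 : ∀ (w : W) (x : P), x ∈ lam.ker → w • x ∈ lam.ker := by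
    intro w x hx
    show lam (w • x) = 0
    rw [heq]
    exact hx
  refine ⟨S₁, ⟨e1⟩, h1, h2, h3, ?_⟩
  -- equivariance of matHom A on P^m
  have hw : ∀ (w : W) (x : Fin (k+1) → P), matHom A (w • x) = w • matHom A x := by
    intro w x
    have := matHom_natural (DistribMulAction.toAddMonoidHom P w) A x
    funext i
    have h2' := congrFun this i
    simp only [DistribMulAction.toAddMonoidHom_apply] at h2'
    show matHom A (fun j => w • x j) i = w • matHom A x i
    rw [← h2']
  -- naturality of matHom A with respect to lam
  have hlam : ∀ x : Fin (k+1) → P, piHom lam (k+1) (matHom A x) = matHom A (piHom lam (k+1) x) :=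
    fun x => matHom_natural lam A x
  have hlamB : ∀ x : Fin (k+1) → P, piHom lam (k+1) (matHom B x) = matHom B (piHom lam (k+1) x) :=
    fun x => matHom_natural lam B x
  letI := subAction _ h1
  letI := subAction _ h2
  letI := subAction _ h3
  let E1 : ↥(preSub lam (k+1) S) ≃+ ↥(preSub lam (k+1) S') :=
    { toFun := fun x => ⟨matHom A (x : Fin (k+1) → P), by
        show piHom lam (k+1) (matHom A (x : Fin (k+1) → P)) ∈ S'
        rw [hlam]
        exact (hSiff _).mp x.2⟩
      invFun := fun y => ⟨matHom B (y : Fin (k+1) → P), by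
        show piHom lam (k+1) (matHom B (y : Fin (k+1) → P)) ∈ S
        rw [hlamB, hSiff, hAB']
        exact y.2⟩
      left_inv := fun x => Subtype.ext (hBA' _)
      right_inv := fun y => Subtype.ext (hAB' _)
      map_add' := fun x y => Subtype.ext ((matHom A).map_add _ _) }
  let E2 : ↥(preSub lam (k+1) S') ≃+ (↥(S₁.comap lam) × (Fin k → ↥lam.ker)) :=
    { toFun := fun x =>
        (⟨(x : Fin (k+1) → P) 0, ((hS'mem _).mp x.2).1⟩,
         fun i => ⟨(x : Fin (k+1) → P) i.succ, by
           have := ((hS'mem _).mp x.2).2 i.succ (Fin.succ_ne_zero i)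
           exact this⟩)
      invFun := fun p => ⟨Fin.cons (p.1 : P) (fun i => (p.2 i : P)), by
        show piHom lam (k+1) (Fin.cons (p.1 : P) (fun i => (p.2 i : P))) ∈ S'
        rw [hS'mem]
        constructor
        · rw [piHom_apply, Fin.cons_zero]
          exact p.1.2
        · intro i hi
          obtain ⟨j, rfl⟩ := Fin.eq_succ_of_ne_zero hi
          rw [piHom_apply, Fin.cons_succ]
          exact (p.2 j).2⟩
      left_inv := fun x => Subtype.ext (by
        funext i
        refine Fin.cases ?_ (fun j => ?_) i
        · simp
        · simp)
      right_inv := fun p => by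
        refine Prod.ext (Subtype.ext ?_) (funext fun i => Subtype.ext ?_)
        · simp
        · simp
      map_add' := fun x y => by
        refine Prod.ext (Subtype.ext ?_) (funext fun i => Subtype.ext ?_)
        · rfl
        · rfl }
  refine ⟨E1.trans E2, fun w x => ?_⟩
  refine Prod.ext (Subtype.ext ?_) (funext fun i => Subtype.ext ?_)
  · show matHom A ((w • x : ↥(preSub lam (k+1) S)) : Fin (k+1) → P) 0
      = w • (matHom A (x : Fin (k+1) → P) 0)
    have : ((w • x : ↥(preSub lam (k+1) S)) : Fin (k+1) → P) = w • (x : Fin (k+1) → P) := rfl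
    rw [this, hw]
    rfl
  · show matHom A ((w • x : ↥(preSub lam (k+1) S)) : Fin (k+1) → P) i.succ
      = w • (matHom A (x : Fin (k+1) → P) i.succ)
    have : ((w • x : ↥(preSub lam (k+1) S)) : Fin (k+1) → P) = w • (x : Fin (k+1) → P) := rfl
    rw [this, hw]
    rfl
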